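/- Let β ∈ (0, 0.1]. Define the cone K^u_β ⊂ ℝ² as the set of vectors c₁(1,−β)ᵀ + c₂(1,1+2β)ᵀ with c₁c₂ ≥ 0. Then for every natural number a ≥ 1, A_a maps K^u_β into the interior of K^u_β (union {0}), where A_a = [[a,1],[1,0]]. -/
import Mathlib


/-- The cone `K^u_β = { c₁(1,−β) + c₂(1,1+2β) : c₁c₂ ≥ 0 } ⊂ ℝ²`. -/
def Ku (β : ℝ) : Set (Fin 2 → ℝ) :=
  {v | ∃ c₁ c₂ : ℝ, c₁ * c₂ ≥ 0 ∧ v = c₁ • ![1, -β] + c₂ • ![1, 1 + 2 * β]}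

lemma openPos (β : ℝ) : IsOpen {v : Fin 2 → ℝ | 0 < (1 + 2*β) * v 0 - v 1 ∧ 0 < v 1 + β * v 0} := by
  apply IsOpen.inter
  · exact isOpen_lt continuous_const ((continuous_const.mul (continuous_apply 0)).sub (continuous_apply 1))
  · exact isOpen_lt continuous_const ((continuous_apply 1).add (continuous_const.mul (continuous_apply 0)))

lemma openNeg (β : ℝ) : IsOpen {v : Fin 2 → ℝ | (1 + 2*β) * v 0 - v 1 < 0 ∧ v 1 + β * v 0 < 0} := by
  apply IsOpen.inter
  · exact isOpen_lt ((continuous_const.mul (continuous_apply 0)).sub (continuous_apply 1)) continuous_const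
  · exact isOpen_lt ((continuous_apply 1).add (continuous_const.mul (continuous_apply 0))) continuous_const

lemma decompKu (β : ℝ) (hβ : 0 < β) (v : Fin 2 → ℝ)
    (h : 0 ≤ ((1 + 2*β) * v 0 - v 1) * (v 1 + β * v 0)) : v ∈ Ku β := by
  have hΔ : (0:ℝ) < 1 + 3*β := by linarith
  refine ⟨((1 + 2*β) * v 0 - v 1) / (1 + 3*β), (v 1 + β * v 0) / (1 + 3*β), ?_, ?_⟩
  · have : ((1 + 2*β) * v 0 - v 1) / (1 + 3*β) * ((v 1 + β * v 0) / (1 + 3*β))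
        = (((1 + 2*β) * v 0 - v 1) * (v 1 + β * v 0)) / ((1 + 3*β) * (1 + 3*β)) :=
      div_mul_div_comm _ _ _ _
    rw [this]
    positivity
  · funext i
    fin_cases i <;>
      simp [Matrix.cons_val_zero, Matrix.cons_val_one, Matrix.head_cons] <;> field_simp <;> ring

lemma combPos {c₁ c₂ P Q : ℝ} (h1 : 0 ≤ c₁) (h2 : 0 ≤ c₂) (hP : 0 < P) (hQ : 0 < Q)
    (h : 0 < c₁ ∨ 0 < c₂) : 0 < c₁ * P + c₂ * Q := by
  rcases h with h | h
  · have a1 := mul_pos h hP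
    have a2 := mul_nonneg h2 hQ.le
    linarith
  · have a1 := mul_nonneg h1 hP.le
    have a2 := mul_pos h hQ
    linarith

lemma memIntPos (β : ℝ) (hβ : 0 < β) (w : Fin 2 → ℝ)
    (h1 : 0 < (1 + 2*β) * w 0 - w 1) (h2 : 0 < w 1 + β * w 0) : w ∈ interior (Ku β) := by
  refine mem_interior.2 ⟨_, ?_, openPos β, ⟨h1, h2⟩⟩
  intro v hv
  exact decompKu β hβ v (le_of_lt (mul_pos hv.1 hv.2))

lemma memIntNeg (β : ℝ) (hβ : 0 < β) (w : Fin 2 → ℝ)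
    (h1 : (1 + 2*β) * w 0 - w 1 < 0) (h2 : w 1 + β * w 0 < 0) : w ∈ interior (Ku β) := by
  refine mem_interior.2 ⟨_, ?_, openNeg β, ⟨h1, h2⟩⟩
  intro v hv
  exact decompKu β hβ v (le_of_lt (mul_pos_of_neg_of_neg hv.1 hv.2))

/-- For `β ∈ (0, 0.1]` and every `a ≥ 1`, the matrix `A_a = [[a,1],[1,0]]`
maps `K^u_β` into the interior of `K^u_β` (union `{0}`). -/
theorem stmt2 (β : ℝ) (hβ : β ∈ Set.Ioc (0 : ℝ) 0.1) (a : ℕ) (ha : 1 ≤ a)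
    (v : Fin 2 → ℝ) (hv : v ∈ Ku β) :
    (!![(a : ℝ), 1; 1, 0]).mulVec v ∈ interior (Ku β) ∪ {0} := by
  obtain ⟨hβ0, hβ1⟩ := hβ
  have hβ1' : β ≤ 0.1 := hβ1
  have ha1 : (1:ℝ) ≤ (a:ℝ) := by exact_mod_cast ha
  obtain ⟨c₁, c₂, hc, hveq⟩ := hv
  set w := (!![(a : ℝ), 1; 1, 0]).mulVec v with hw
  have hv0 : v 0 = c₁ + c₂ := by
    rw [hveq]; simp
  have hv1 : v 1 = -β * c₁ + (1 + 2*β) * c₂ := by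
    rw [hveq]; simp [Matrix.cons_val_one, Matrix.head_cons]; ring
  have hw0 : w 0 = (a:ℝ) * v 0 + v 1 := by
    simp [hw, Matrix.mulVec, dotProduct, Fin.sum_univ_two]
  have hw1 : w 1 = v 0 := by
    simp [hw, Matrix.mulVec, dotProduct, Fin.sum_univ_two]
  -- the two linear functionals evaluated at w
  have hL1 : (1 + 2*β) * w 0 - w 1
      = c₁ * ((1 + 2*β) * ((a:ℝ) - β) - 1) + c₂ * ((1 + 2*β) * ((a:ℝ) + 1 + 2*β) - 1) := by
    rw [hw0, hw1, hv0, hv1]; ring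
  have hL2 : w 1 + β * w 0
      = c₁ * (1 + β * ((a:ℝ) - β)) + c₂ * (1 + β * ((a:ℝ) + 1 + 2*β)) := by
    rw [hw0, hw1, hv0, hv1]; ring
  have hP1 : 0 < (1 + 2*β) * ((a:ℝ) - β) - 1 := by nlinarith
  have hQ1 : 0 < (1 + 2*β) * ((a:ℝ) + 1 + 2*β) - 1 := by nlinarith
  have hP2 : 0 < 1 + β * ((a:ℝ) - β) := by nlinarith
  have hQ2 : 0 < 1 + β * ((a:ℝ) + 1 + 2*β) := by nlinarith
  rcases mul_nonneg_iff.mp hc with ⟨h1, h2⟩ | ⟨h1, h2⟩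
  · by_cases hz : c₁ = 0 ∧ c₂ = 0
    · right
      have : w = 0 := by
        funext i
        fin_cases i <;> simp [hw0, hw1, hv0, hv1, hz.1, hz.2]
      simp [this]
    · left
      have hpos : 0 < c₁ ∨ 0 < c₂ := by
        rcases h1.lt_or_eq with h | h
        · exact Or.inl h
        · rcases h2.lt_or_eq with h' | h'
          · exact Or.inr h'
          · exact absurd ⟨h.symm, h'.symm⟩ hz
      have k1 : 0 < (1 + 2*β) * w 0 - w 1 := by
        rw [hL1]; exact combPos h1 h2 hP1 hQ1 hpos
      have k2 : 0 < w 1 + β * w 0 := by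
        rw [hL2]; exact combPos h1 h2 hP2 hQ2 hpos
      exact memIntPos β hβ0 w k1 k2
  · by_cases hz : c₁ = 0 ∧ c₂ = 0
    · right
      have : w = 0 := by
        funext i
        fin_cases i <;> simp [hw0, hw1, hv0, hv1, hz.1, hz.2]
      simp [this]
    · left
      have hneg : c₁ < 0 ∨ c₂ < 0 := by
        rcases h1.lt_or_eq with h | h
        · exact Or.inl h
        · rcases h2.lt_or_eq with h' | h'
          · exact Or.inr h'
          · exact absurd ⟨h, h'⟩ hz
      have k1 : (1 + 2*β) * w 0 - w 1 < 0 := by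
        have := combPos (neg_nonneg.2 h1) (neg_nonneg.2 h2) hP1 hQ1
          (by rcases hneg with h | h; exacts [Or.inl (by linarith), Or.inr (by linarith)])
        rw [hL1]; linarith
      have k2 : w 1 + β * w 0 < 0 := by
        have := combPos (neg_nonneg.2 h1) (neg_nonneg.2 h2) hP2 hQ2
          (by rcases hneg with h | h; exacts [Or.inl (by linarith), Or.inr (by linarith)])
        rw [hL2]; linarith
      exact memIntNeg β hβ0 w k1 k2
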